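/- Suppose α ∈ (0,1], K ≥ 0, and u ∈ C^{1,α}(B_R) satisfies, for every r ∈ (0, R/2], the bound [∇u]_{C^{0,α}(B_r)} ≤ K r^{-α} ( (1/(2r)) inf_{l affine} (avg_{B_{2r}} |u - l|²)^{1/2} ). Then there exists σ = σ(α,K) ∈ (0, 1/2] such that for every r ∈ (0, R/2] and s := σ r: (1/s) inf_{l affine} (avg_{B_s} |u - l|²)^{1/2} ≤ (1/2)·(1/r) inf_{l affine} (avg_{B_{2r}} |u - l|²)^{1/2}. -/

import Mathlib

open MeasureTheory Metric
open scoped RealInnerProductSpace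

noncomputable section

/-- The normalized `L²` norm `(⨍_{B_r} u²)^{1/2}` of `u` on the ball `B_r` centered at
the origin. -/
def avgL2 (d : ℕ) (u : EuclideanSpace ℝ (Fin d) → ℝ) (r : ℝ) : ℝ :=
  Real.sqrt (((volume (ball (0 : EuclideanSpace ℝ (Fin d)) r)).toReal)⁻¹ *
    ∫ x in ball (0 : EuclideanSpace ℝ (Fin d)) r, (u x) ^ 2)

/-- `inf_{l affine} (⨍_{B_r} |u - l|²)^{1/2}`. -/
def flatAffine (d : ℕ) (u : EuclideanSpace ℝ (Fin d) → ℝ) (r : ℝ) : ℝ :=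
  sInf {y : ℝ | ∃ (c : ℝ) (p : EuclideanSpace ℝ (Fin d)),
    y = avgL2 d (fun x => u x - (c + ⟪p, x⟫)) r}

/-- Improvement of flatness from a `C^{1,α}`-type bound on the gradient: if for every
`r ∈ (0, R/2]` the `α`-Hölder seminorm of `∇u` on `B_r` is at most
`K r^{-α} · ((1/(2r)) inf_l (⨍_{B_{2r}} |u-l|²)^{1/2})`, then for some `σ = σ(α,K) ∈ (0,1/2]`
the affine flatness improves by a factor `1/2` from scale `2r` to scale `σr`. -/
theorem stmt17 (α K : ℝ) (hα₀ : 0 < α) (hα : α ≤ 1) (hK : 0 ≤ K) :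
    ∃ σ : ℝ, 0 < σ ∧ σ ≤ 1 / 2 ∧
      ∀ (d : ℕ) (R : ℝ) (u : EuclideanSpace ℝ (Fin d) → ℝ), 0 < R →
        (∀ x ∈ ball (0 : EuclideanSpace ℝ (Fin d)) R, DifferentiableAt ℝ u x) →
        (∀ r, 0 < r → r ≤ R / 2 →
          ∀ x ∈ ball (0 : EuclideanSpace ℝ (Fin d)) r,
          ∀ y ∈ ball (0 : EuclideanSpace ℝ (Fin d)) r,
            ‖gradient u x - gradient u y‖ ≤
              (K * r ^ (-α) * ((1 / (2 * r)) * flatAffine d u (2 * r))) * ‖x - y‖ ^ α) →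
        ∀ r, 0 < r → r ≤ R / 2 →
          (1 / (σ * r)) * flatAffine d u (σ * r) ≤
            (1 / 2) * ((1 / r) * flatAffine d u (2 * r)) := by
  have hαne : α ≠ 0 := ne_of_gt hα₀
  have hKpos : (0:ℝ) < 1 + K := by linarith
  have hbase : (0:ℝ) < (1 + K)⁻¹ := by positivity
  set σ : ℝ := min (1/2) ((1 + K)⁻¹ ^ (α⁻¹ : ℝ)) with hσdef
  have hσpos : 0 < σ := lt_min (by norm_num) (Real.rpow_pos_of_pos hbase _)
  have hσhalf : σ ≤ 1/2 := min_le_left _ _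
  have hKσ : K * σ ^ α ≤ 1 := by
    have h1 : σ ^ α ≤ ((1 + K)⁻¹ ^ (α⁻¹ : ℝ)) ^ α :=
      Real.rpow_le_rpow hσpos.le (min_le_right _ _) hα₀.le
    have h2 : ((1 + K)⁻¹ ^ (α⁻¹ : ℝ)) ^ α = (1 + K)⁻¹ := by
      rw [← Real.rpow_mul hbase.le, inv_mul_cancel₀ hαne, Real.rpow_one]
    have h3 : K * σ ^ α ≤ K * (1 + K)⁻¹ :=
      mul_le_mul_of_nonneg_left (h1.trans_eq h2) hK
    refine h3.trans ?_
    rw [mul_inv_le_iff₀ hKpos]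
    linarith
  refine ⟨σ, hσpos, hσhalf, ?_⟩
  intro d R u hR hdiff hHold r hr hrR
  set s := σ * r with hs
  have hs0 : 0 < s := mul_pos hσpos hr
  have hsr : s ≤ r / 2 := by
    have : σ * r ≤ (1/2) * r := mul_le_mul_of_nonneg_right hσhalf hr.le
    linarith
  have hsR : s < R := by linarith
  have hball_sub : ball (0 : EuclideanSpace ℝ (Fin d)) s ⊆
      ball (0 : EuclideanSpace ℝ (Fin d)) R := ball_subset_ball hsR.le
  have hcball_sub : closedBall (0 : EuclideanSpace ℝ (Fin d)) s ⊆
      ball (0 : EuclideanSpace ℝ (Fin d)) R := closedBall_subset_ball hsR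
  have hflat2 : 0 ≤ flatAffine d u (2*r) :=
    Real.sInf_nonneg (by rintro y ⟨c, p, rfl⟩; exact Real.sqrt_nonneg _)
  set Φ := (1 / (2*r)) * flatAffine d u (2*r) with hΦdef
  have hΦ : 0 ≤ Φ := mul_nonneg (by positivity) hflat2
  set M := K * r ^ (-α) * Φ with hM
  have hM0 : 0 ≤ M := mul_nonneg (mul_nonneg hK (Real.rpow_nonneg hr.le _)) hΦ
  -- gradient (fderiv) bound on the ball of radius s
  have hgrad : ∀ y ∈ ball (0 : EuclideanSpace ℝ (Fin d)) s,
      ‖fderiv ℝ u y - fderiv ℝ u 0‖ ≤ M * s ^ α := by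
    intro y hy
    have hys : ‖y‖ < s := mem_ball_zero_iff.mp hy
    have hy' : y ∈ ball (0 : EuclideanSpace ℝ (Fin d)) r :=
      mem_ball_zero_iff.mpr (by linarith)
    have h0 : (0 : EuclideanSpace ℝ (Fin d)) ∈ ball (0 : EuclideanSpace ℝ (Fin d)) r :=
      mem_ball_self hr
    have hH := hHold r hr hrR y hy' 0 h0
    have heq : ‖gradient u y - gradient u 0‖ = ‖fderiv ℝ u y - fderiv ℝ u 0‖ := by
      rw [gradient, gradient, ← map_sub, LinearIsometryEquiv.norm_map]
    rw [heq, sub_zero, ← hΦdef, ← hM] at hH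
    refine hH.trans ?_
    exact mul_le_mul_of_nonneg_left
      (Real.rpow_le_rpow (norm_nonneg _) hys.le hα₀.le) hM0
  set c : ℝ := u 0 with hc
  set p : EuclideanSpace ℝ (Fin d) := gradient u 0 with hp
  set f : EuclideanSpace ℝ (Fin d) → ℝ := fun x => u x - (c + ⟪p, x⟫) with hf
  have hip : ∀ x, ⟪p, x⟫ = fderiv ℝ u 0 x := by
    intro x
    rw [hp, gradient, ← InnerProductSpace.toDual_apply_apply,
      LinearIsometryEquiv.apply_symm_apply]
  set C : ℝ := (M * s ^ α) * s with hC
  have hC0 : 0 ≤ C := mul_nonneg (mul_nonneg hM0 (Real.rpow_nonneg hs0.le _)) hs0.le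
  have hpt : ∀ x ∈ ball (0 : EuclideanSpace ℝ (Fin d)) s, |f x| ≤ C := by
    intro x hx
    have h1 := Convex.norm_image_sub_le_of_norm_fderiv_le'
      (fun y hy => hdiff y (hball_sub hy)) hgrad (convex_ball _ _)
      (mem_ball_self hs0) hx
    rw [sub_zero] at h1
    have hfx : f x = u x - u 0 - fderiv ℝ u 0 x := by
      rw [hf]; simp only [hip x, hc]; ring
    calc |f x| = ‖u x - u 0 - fderiv ℝ u 0 x‖ := by rw [hfx]; rfl
      _ ≤ (M * s ^ α) * ‖x‖ := h1
      _ ≤ C := by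
          rw [hC]
          exact mul_le_mul_of_nonneg_left (mem_ball_zero_iff.mp hx).le
            (mul_nonneg hM0 (Real.rpow_nonneg hs0.le _))
  -- integral estimates
  have hVpos : 0 < (volume (ball (0 : EuclideanSpace ℝ (Fin d)) s)).toReal := by
    refine ENNReal.toReal_pos (measure_ball_pos volume 0 hs0).ne' measure_ball_lt_top.ne
  have hcont : ContinuousOn (fun x => (f x) ^ 2)
      (closedBall (0 : EuclideanSpace ℝ (Fin d)) s) := by
    apply ContinuousOn.pow
    apply ContinuousOn.sub
    · exact fun x hx => ((hdiff x (hcball_sub hx)).continuousAt).continuousWithinAt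
    · exact (continuous_const.add (continuous_const.inner continuous_id)).continuousOn
  have hint : IntegrableOn (fun x => (f x) ^ 2)
      (ball (0 : EuclideanSpace ℝ (Fin d)) s) :=
    (hcont.integrableOn_compact (isCompact_closedBall _ _)).mono_set ball_subset_closedBall
  have hintle : ∫ x in ball (0 : EuclideanSpace ℝ (Fin d)) s, (f x) ^ 2 ≤
      (volume (ball (0 : EuclideanSpace ℝ (Fin d)) s)).toReal * C ^ 2 := by
    have h1 : ∫ x in ball (0 : EuclideanSpace ℝ (Fin d)) s, (f x) ^ 2 ≤
        ∫ _x in ball (0 : EuclideanSpace ℝ (Fin d)) s, C ^ 2 := by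
      refine setIntegral_mono_on hint
        (integrableOn_const measure_ball_lt_top.ne) measurableSet_ball ?_
      intro x hx
      have h := hpt x hx
      calc (f x) ^ 2 = |f x| ^ 2 := (sq_abs _).symm
        _ ≤ C ^ 2 := by nlinarith [abs_nonneg (f x)]
    simpa [smul_eq_mul, Measure.real] using h1
  have havg : avgL2 d f s ≤ C := by
    rw [avgL2]
    have h1 : ((volume (ball (0 : EuclideanSpace ℝ (Fin d)) s)).toReal)⁻¹ *
        ∫ x in ball (0 : EuclideanSpace ℝ (Fin d)) s, (f x) ^ 2 ≤ C ^ 2 := by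
      have h2 := mul_le_mul_of_nonneg_left hintle
        (inv_nonneg.mpr hVpos.le)
      rwa [← mul_assoc, inv_mul_cancel₀ hVpos.ne', one_mul] at h2
    calc Real.sqrt _ ≤ Real.sqrt (C ^ 2) := Real.sqrt_le_sqrt h1
      _ = C := by rw [Real.sqrt_sq hC0]
  have hflats : flatAffine d u s ≤ C := by
    have hbdd : BddBelow {y : ℝ | ∃ (c' : ℝ) (p' : EuclideanSpace ℝ (Fin d)),
        y = avgL2 d (fun x => u x - (c' + ⟪p', x⟫)) s} :=
      ⟨0, by rintro y ⟨c', p', rfl⟩; exact Real.sqrt_nonneg _⟩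
    have hmem : avgL2 d f s ∈ {y : ℝ | ∃ (c' : ℝ) (p' : EuclideanSpace ℝ (Fin d)),
        y = avgL2 d (fun x => u x - (c' + ⟪p', x⟫)) s} := ⟨c, p, rfl⟩
    exact (csInf_le hbdd hmem).trans havg
  -- final arithmetic
  have hrr : r ^ (-α) * r ^ α = 1 := by
    rw [← Real.rpow_add hr]; simp
  have hsα : s ^ α = σ ^ α * r ^ α := Real.mul_rpow hσpos.le hr.le
  have hMs : M * s ^ α = K * σ ^ α * Φ := by
    rw [hsα, hM]
    linear_combination K * σ ^ α * Φ * hrr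
  have hfin : (1 / s) * flatAffine d u s ≤ Φ := by
    calc (1 / s) * flatAffine d u s ≤ (1 / s) * C :=
          mul_le_mul_of_nonneg_left hflats (by positivity)
      _ = M * s ^ α := by rw [hC]; field_simp
      _ = K * σ ^ α * Φ := hMs
      _ ≤ 1 * Φ := mul_le_mul_of_nonneg_right hKσ hΦ
      _ = Φ := one_mul _
  calc (1 / (σ * r)) * flatAffine d u (σ * r) = (1 / s) * flatAffine d u s := by rw [hs]
    _ ≤ Φ := hfin
    _ = (1 / 2) * ((1 / r) * flatAffine d u (2 * r)) := by rw [hΦdef]; ring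

end
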